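/- Let A be a unital C*-algebra, B ⊆ A a unital C*-subalgebra, and E : A → B a contractive linear map with E(b) = b for all b ∈ B. Then for all a, a' ∈ A, ‖aa' − E(aa')‖ ≤ 2(‖a‖·‖a' − E(a')‖ + ‖a'‖·‖a − E(a)‖). In particular the seminorm a ↦ ‖a − E(a)‖ is (2,0)-quasi-Leibniz for the Jordan product a∘a' = (aa' + a'a)/2 and Lie product {a,a'} = (aa' − a'a)/(2i): max(‖a∘a' − E(a∘a')‖, ‖{a,a'} − E({a,a'})‖) ≤ 2(‖a‖·‖a' − E(a')‖ + ‖a'‖·‖a − E(a)‖). -/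

import Mathlib

lemma condExp_quasiLeibniz_main
    {A : Type*} [NormedRing A] [StarRing A] [CStarRing A] [Nontrivial A]
    [NormedAlgebra ℂ A] [StarModule ℂ A]
    (B : StarSubalgebra ℂ A)
    (E : A →ₗ[ℂ] A)
    (hrange : ∀ a : A, E a ∈ B)
    (hfix : ∀ b ∈ B, E b = b)
    (hcontr : ∀ a : A, ‖E a‖ ≤ ‖a‖)
    (a a' : A) :
    ‖a * a' - E (a * a')‖ ≤ 2 * (‖a‖ * ‖a' - E a'‖ + ‖a'‖ * ‖a - E a‖) := by
  have key : a * a' - E (a * a')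
      = (a - E a) * a' + E a * (a' - E a') + E (E a * E a' - a * a') := by
    have hB : E a * E a' ∈ B := mul_mem (hrange a) (hrange a')
    rw [map_sub, hfix _ hB]
    noncomm_ring
  have h3 : ‖E (E a * E a' - a * a')‖ ≤ ‖a - E a‖ * ‖a'‖ + ‖a‖ * ‖a' - E a'‖ := by
    refine (hcontr _).trans ?_
    have heq : E a * E a' - a * a' = (E a - a) * a' + E a * (E a' - a') := by
      noncomm_ring
    rw [heq]
    refine (norm_add_le _ _).trans (add_le_add ?_ ?_)
    · calc ‖(E a - a) * a'‖ ≤ ‖E a - a‖ * ‖a'‖ := norm_mul_le _ _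
        _ = ‖a - E a‖ * ‖a'‖ := by rw [norm_sub_rev]
    · calc ‖E a * (E a' - a')‖ ≤ ‖E a‖ * ‖E a' - a'‖ := norm_mul_le _ _
        _ ≤ ‖a‖ * ‖a' - E a'‖ := by rw [norm_sub_rev]; exact
            mul_le_mul_of_nonneg_right (hcontr a) (norm_nonneg _)
  calc ‖a * a' - E (a * a')‖
      ≤ ‖(a - E a) * a'‖ + ‖E a * (a' - E a')‖ + ‖E (E a * E a' - a * a')‖ := by
        rw [key]; exact (norm_add_le _ _).trans (add_le_add_left (norm_add_le _ _) _)
    _ ≤ ‖a - E a‖ * ‖a'‖ + ‖a‖ * ‖a' - E a'‖ + (‖a - E a‖ * ‖a'‖ + ‖a‖ * ‖a' - E a'‖) := by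
        refine add_le_add (add_le_add (norm_mul_le _ _) ?_) h3
        exact (norm_mul_le _ _).trans
          (mul_le_mul_of_nonneg_right (hcontr a) (norm_nonneg _))
    _ = 2 * (‖a‖ * ‖a' - E a'‖ + ‖a'‖ * ‖a - E a‖) := by ring

/-- for a contractive linear map `E : A → B ⊆ A` fixing `B` pointwise,
the seminorm `a ↦ ‖a − E a‖` satisfies a (2,0)-quasi-Leibniz estimate for products,
and hence for the Jordan product `a∘a' = (aa' + a'a)/2` and the Lie product
`{a,a'} = (aa' − a'a)/(2i)`. -/
theorem condExp_quasiLeibniz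
    {A : Type*} [NormedRing A] [StarRing A] [CStarRing A] [Nontrivial A]
    [NormedAlgebra ℂ A] [StarModule ℂ A]
    (B : StarSubalgebra ℂ A)
    (E : A →ₗ[ℂ] A)
    (hrange : ∀ a : A, E a ∈ B)
    (hfix : ∀ b ∈ B, E b = b)
    (hcontr : ∀ a : A, ‖E a‖ ≤ ‖a‖)
    (a a' : A) :
    ‖a * a' - E (a * a')‖ ≤ 2 * (‖a‖ * ‖a' - E a'‖ + ‖a'‖ * ‖a - E a‖) ∧
    max ‖(2 : ℂ)⁻¹ • (a * a' + a' * a) - E ((2 : ℂ)⁻¹ • (a * a' + a' * a))‖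
        ‖(2 * Complex.I)⁻¹ • (a * a' - a' * a) - E ((2 * Complex.I)⁻¹ • (a * a' - a' * a))‖
      ≤ 2 * (‖a‖ * ‖a' - E a'‖ + ‖a'‖ * ‖a - E a‖) := by
  have h1 := condExp_quasiLeibniz_main B E hrange hfix hcontr a a'
  have h2 := condExp_quasiLeibniz_main B E hrange hfix hcontr a' a
  set M := 2 * (‖a‖ * ‖a' - E a'‖ + ‖a'‖ * ‖a - E a‖) with hM
  have h2' : ‖a' * a - E (a' * a)‖ ≤ M := h2.trans_eq (by rw [hM]; ring)
  refine ⟨h1, max_le ?_ ?_⟩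
  · have key : (2 : ℂ)⁻¹ • (a * a' + a' * a) - E ((2 : ℂ)⁻¹ • (a * a' + a' * a))
        = (2 : ℂ)⁻¹ • ((a * a' - E (a * a')) + (a' * a - E (a' * a))) := by
      rw [map_smul, ← smul_sub, map_add]
      module
    rw [key, norm_smul]
    have : ‖(2 : ℂ)⁻¹‖ = 2⁻¹ := by simp
    rw [this]
    calc (2:ℝ)⁻¹ * ‖(a * a' - E (a * a')) + (a' * a - E (a' * a))‖
        ≤ 2⁻¹ * (M + M) := by
          refine mul_le_mul_of_nonneg_left ((norm_add_le _ _).trans (add_le_add h1 h2')) (by norm_num)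
      _ = M := by ring
  · have key : (2 * Complex.I)⁻¹ • (a * a' - a' * a) - E ((2 * Complex.I)⁻¹ • (a * a' - a' * a))
        = (2 * Complex.I)⁻¹ • ((a * a' - E (a * a')) - (a' * a - E (a' * a))) := by
      rw [map_smul, ← smul_sub, map_sub]
      module
    rw [key, norm_smul]
    have : ‖(2 * Complex.I)⁻¹‖ = 2⁻¹ := by
      simp [norm_inv, Complex.norm_I]
    rw [this]
    calc (2:ℝ)⁻¹ * ‖(a * a' - E (a * a')) - (a' * a - E (a' * a))‖
        ≤ 2⁻¹ * (M + M) := by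
          refine mul_le_mul_of_nonneg_left ((norm_sub_le _ _).trans (add_le_add h1 h2')) (by norm_num)
      _ = M := by ring
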